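/- With the user reinforcement dynamics above (m = o, identity-match reward), the expected one-step change of the payoff u(t) = Σ_i π_i Σ_j U_{ij}(t) D_{ji}(t) satisfies E[u(t+1) | F_t] − u(t) = Σ_i (π_i²/S̃^i)(Σ_j U_{ij} D_{ji}² − (Σ_j U_{ij} D_{ji})²) ≥ 0, where S̃^i = Σ_{j'} S_{ij'} + 1. Hence {u(t)} is a submartingale. -/

import Mathlib

open Finset

def RowStochastic {a b : ℕ} (M : Matrix (Fin a) (Fin b) ℝ) : Prop :=
  (∀ i j, 0 ≤ M i j) ∧ ∀ i, ∑ j, M i j = 1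

/-- Expected one-step change of the payoff `u = ∑ i, π i * ∑ j, U i j * D j i`
under the user's Roth–Erev reinforcement dynamics with identity-match reward:
it equals the nonnegative Jensen variance term, so the payoff process is a
submartingale. -/
theorem user_reinforcement_payoff_submartingale {m n : ℕ}
    (π : Fin m → ℝ) (S : Matrix (Fin m) (Fin n) ℝ)
    (D : Matrix (Fin n) (Fin m) ℝ)
    (hπ : (∀ i, 0 ≤ π i) ∧ ∑ i, π i = 1)
    (hS : ∀ i j, 0 < S i j) (hD : RowStochastic D)
    (U : Matrix (Fin m) (Fin n) ℝ)
    (hU : ∀ i j, U i j = S i j / ∑ j', S i j')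
    (Splus : Fin m → Fin n → Fin m → Matrix (Fin m) (Fin n) ℝ)
    (hSplus : ∀ i0 j0 i' i j,
      Splus i0 j0 i' i j = S i j + if i = i0 ∧ j = j0 ∧ i' = i0 then 1 else 0)
    (Uplus : Fin m → Fin n → Fin m → Matrix (Fin m) (Fin n) ℝ)
    (hUplus : ∀ i0 j0 i' i j,
      Uplus i0 j0 i' i j = Splus i0 j0 i' i j / ∑ j', Splus i0 j0 i' i j') :
    (∑ i0, ∑ j0, ∑ i', π i0 * U i0 j0 * D j0 i' *
        (∑ i, π i * ∑ j, Uplus i0 j0 i' i j * D j i)) -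
      (∑ i, π i * ∑ j, U i j * D j i) =
      (∑ i, (π i) ^ 2 / ((∑ j', S i j') + 1) *
        ((∑ j, U i j * (D j i) ^ 2) - (∑ j, U i j * D j i) ^ 2)) ∧
    0 ≤ ∑ i, (π i) ^ 2 / ((∑ j', S i j') + 1) *
        ((∑ j, U i j * (D j i) ^ 2) - (∑ j, U i j * D j i) ^ 2) := by
  obtain ⟨hDnn, hDrow⟩ := hD
  obtain ⟨hπnn, hπsum⟩ := hπ
  rcases Nat.eq_zero_or_pos n with hn | hn
  · subst hn
    simp
  have hne : (Finset.univ : Finset (Fin n)).Nonempty := ⟨⟨0, hn⟩, Finset.mem_univ _⟩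
  have hσ : ∀ i, 0 < ∑ j', S i j' := fun i =>
    Finset.sum_pos (fun j _ => hS i j) hne
  have hσ1 : ∀ i, (0:ℝ) < (∑ j', S i j') + 1 := fun i => by linarith [hσ i]
  have hUnn : ∀ i j, 0 ≤ U i j := fun i j => by
    rw [hU]; exact div_nonneg (hS i j).le (hσ i).le
  have hUrow : ∀ i, ∑ j, U i j = 1 := by
    intro i
    simp only [hU, ← Finset.sum_div]
    exact div_self (hσ i).ne'
  have hSD : ∀ i, ∑ j, S i j * D j i = (∑ j', S i j') * (∑ j, U i j * D j i) := by
    intro i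
    rw [Finset.mul_sum]
    refine Finset.sum_congr rfl fun j _ => ?_
    have h0 := (hσ i).ne'
    rw [hU]
    field_simp
  -- closed form for Uplus
  have hUplus' : ∀ i0 j0 i' i j, Uplus i0 j0 i' i j =
      if i = i0 ∧ i' = i0 then
        (S i j + if j = j0 then 1 else 0) / ((∑ j', S i j') + 1)
      else U i j := by
    intro i0 j0 i' i j
    rw [hUplus]
    by_cases h : i = i0 ∧ i' = i0
    · obtain ⟨h1, h2⟩ := h
      rw [h1, h2]
      have hrow : ∀ j, Splus i0 j0 i0 i0 j = S i0 j + if j = j0 then 1 else 0 := by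
        intro j; rw [hSplus]; simp
      rw [if_pos ⟨rfl, rfl⟩]
      simp only [hrow]
      congr 1
      rw [Finset.sum_add_distrib]
      congr 1
      simp [Finset.sum_ite_eq']
    · have hrow : ∀ j, Splus i0 j0 i' i j = S i j := by
        intro j
        rw [hSplus, if_neg, add_zero]
        exact fun hc => h ⟨hc.1, hc.2.2⟩
      rw [if_neg h]
      simp only [hrow, hU]
  -- inner sum
  have hinner : ∀ i0 j0 i' i, ∑ j, Uplus i0 j0 i' i j * D j i =
      (∑ j, U i j * D j i) + (if i = i0 ∧ i' = i0 then
        (D j0 i0 - ∑ j, U i0 j * D j i0) / ((∑ j', S i0 j') + 1) else 0) := by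
    intro i0 j0 i' i
    by_cases h : i = i0 ∧ i' = i0
    · obtain ⟨h1, h2⟩ := h
      rw [h1, h2]
      simp only [hUplus', eq_self_iff_true, and_self, if_true]
      have hsum : ∑ j, (S i0 j + if j = j0 then 1 else 0) / ((∑ j', S i0 j') + 1) * D j i0
          = ((∑ j, S i0 j * D j i0) + D j0 i0) / ((∑ j', S i0 j') + 1) := by
        refine Eq.trans (Finset.sum_congr rfl fun j _ => div_mul_eq_mul_div _ _ _) ?_
        rw [← Finset.sum_div]
        congr 1
        simp [add_mul, Finset.sum_add_distrib, ite_mul, Finset.sum_ite_eq']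
      rw [hsum, hSD]
      have h1 := (hσ1 i0).ne'
      field_simp
      ring
    · simp only [hUplus', if_neg h]
      rw [add_zero]
  -- middle sum
  have hg : ∀ i0 j0 i', (∑ i, π i * ∑ j, Uplus i0 j0 i' i j * D j i) =
      (∑ i, π i * ∑ j, U i j * D j i) + (if i' = i0 then
        π i0 * (D j0 i0 - ∑ j, U i0 j * D j i0) / ((∑ j', S i0 j') + 1) else 0) := by
    intro i0 j0 i'
    simp only [hinner, mul_add, Finset.sum_add_distrib]
    congr 1
    by_cases h : i' = i0
    · simp only [h, eq_self_iff_true, and_true, if_true, mul_ite, mul_zero]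
      rw [Finset.sum_ite_eq' Finset.univ i0
        (fun i => π i * ((D j0 i0 - ∑ j, U i0 j * D j i0) / ((∑ j', S i0 j') + 1)))]
      simp [mul_div_assoc]
    · refine Eq.trans (Finset.sum_eq_zero fun i _ => ?_) (by rw [if_neg h])
      rw [if_neg (fun hc => h hc.2), mul_zero]
  set u : ℝ := ∑ i, π i * ∑ j, U i j * D j i with hu
  -- sum of the constant part equals u
  have hA : ∑ i0, ∑ j0, ∑ i', π i0 * U i0 j0 * D j0 i' * u = u := by
    have h1 : ∀ i0 j0, ∑ i', π i0 * U i0 j0 * D j0 i' * u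
        = π i0 * U i0 j0 * u := by
      intro i0 j0
      rw [show ∑ i', π i0 * U i0 j0 * D j0 i' * u
          = (π i0 * U i0 j0 * u) * ∑ i', D j0 i' by
        rw [Finset.mul_sum]; exact Finset.sum_congr rfl fun _ _ => by ring]
      rw [hDrow, mul_one]
    simp only [h1]
    have h2 : ∀ i0, ∑ j0, π i0 * U i0 j0 * u = π i0 * u := by
      intro i0
      rw [show ∑ j0, π i0 * U i0 j0 * u = (π i0 * u) * ∑ j0, U i0 j0 by
        rw [Finset.mul_sum]; exact Finset.sum_congr rfl fun _ _ => by ring]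
      rw [hUrow, mul_one]
    simp only [h2]
    rw [← Finset.sum_mul, hπsum, one_mul]
  -- the variance identity per row
  have hB2 : ∀ i, ∑ j, U i j * D j i * (D j i - ∑ j', U i j' * D j' i)
      = (∑ j, U i j * (D j i)^2) - (∑ j, U i j * D j i)^2 := by
    intro i
    set v : ℝ := ∑ j', U i j' * D j' i with hv
    calc ∑ j, U i j * D j i * (D j i - v)
        = ∑ j, (U i j * (D j i)^2 - U i j * D j i * v) :=
          Finset.sum_congr rfl fun j _ => by ring
      _ = (∑ j, U i j * (D j i)^2) - (∑ j, U i j * D j i) * v := by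
          rw [Finset.sum_sub_distrib, ← Finset.sum_mul]
      _ = (∑ j, U i j * (D j i)^2) - (∑ j, U i j * D j i)^2 := by
          rw [← hv]; ring
  -- main identity
  have hmain : (∑ i0, ∑ j0, ∑ i', π i0 * U i0 j0 * D j0 i' *
        (∑ i, π i * ∑ j, Uplus i0 j0 i' i j * D j i)) - u =
      ∑ i, (π i) ^ 2 / ((∑ j', S i j') + 1) *
        ((∑ j, U i j * (D j i) ^ 2) - (∑ j, U i j * D j i) ^ 2) := by
    simp only [hg, ← hu, mul_add, Finset.sum_add_distrib, hA]
    rw [add_sub_cancel_left]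
    refine Finset.sum_congr rfl fun i0 _ => ?_
    have h3 : ∀ j0, ∑ i', π i0 * U i0 j0 * D j0 i' *
        (if i' = i0 then π i0 * (D j0 i0 - ∑ j, U i0 j * D j i0) / ((∑ j', S i0 j') + 1) else 0)
        = π i0 * U i0 j0 * D j0 i0 *
          (π i0 * (D j0 i0 - ∑ j, U i0 j * D j i0) / ((∑ j', S i0 j') + 1)) := by
      intro j0
      simp only [mul_ite, mul_zero]
      rw [Finset.sum_ite_eq' Finset.univ i0
        (fun i' => π i0 * U i0 j0 * D j0 i' *
          (π i0 * (D j0 i0 - ∑ j, U i0 j * D j i0) / ((∑ j', S i0 j') + 1)))]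
      simp
    simp only [h3]
    rw [← hB2 i0, Finset.mul_sum]
    refine Finset.sum_congr rfl fun j0 _ => ?_
    have := (hσ1 i0).ne'
    field_simp
  refine ⟨hmain, Finset.sum_nonneg fun i _ => mul_nonneg (div_nonneg (sq_nonneg _) (hσ1 i).le) ?_⟩
  -- Jensen: variance nonnegative
  have key : (∑ j, U i j * (D j i)^2) - (∑ j, U i j * D j i)^2
      = ∑ j, U i j * (D j i - ∑ j', U i j' * D j' i)^2 := by
    set v : ℝ := ∑ j', U i j' * D j' i with hv
    have h1 := hUrow i
    calc (∑ j, U i j * (D j i)^2) - v^2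
        = (∑ j, U i j * (D j i)^2) - 2*v*v + v^2*1 := by ring
      _ = (∑ j, U i j * (D j i)^2) - 2*v*(∑ j, U i j * D j i) + v^2*(∑ j, U i j) := by
          rw [h1, ← hv]
      _ = ∑ j, (U i j * (D j i)^2 - 2*v*(U i j * D j i) + v^2 * U i j) := by
          rw [Finset.sum_add_distrib, Finset.sum_sub_distrib, ← Finset.mul_sum, ← Finset.mul_sum]
      _ = ∑ j, U i j * (D j i - v)^2 := Finset.sum_congr rfl fun j _ => by ring
  rw [key]
  exact Finset.sum_nonneg fun j _ => mul_nonneg (hUnn i j) (sq_nonneg _)
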